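/- arXiv:2305.06979 — 5 statements merged into one kernel-verified Lean document; each statement's English description precedes it below -/
import Mathlib

section
/- Composing a combinatorial monitoring circuit with a monitored circuit does not change the monitored circuit's state evolution: if M's write registers are disjoint from C's registers (M never writes any register that C reads or writes), then for every valuation μ and every cycle i, the restriction of the composed circuit's state after i steps to C's registers equals C's state after i steps from μ restricted to C's registers. -/
/-- Composing a combinatorial monitoring circuit `M` with a monitored circuit `C`
does not change the monitored circuit's state evolution on `C`'s registers,
provided `M` writes no register that `C` reads or writes. -/
theorem stmt2 {R Val : Type}
    (CW MW Cregs : Set R)            -- write sets of C and M; registers C reads or writes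
    (hCW : CW ⊆ Cregs)
    (hdisj : ∀ r ∈ MW, r ∉ Cregs)
    (CA MA : R → (R → Val) → Val)    -- right-hand-side evaluation functions
    -- C's expressions depend only on C's registers:
    (hdep : ∀ r ∈ CW, ∀ μ μ' : R → Val, (∀ v ∈ Cregs, μ v = μ' v) → CA r μ = CA r μ')
    (stepC stepComp : (R → Val) → (R → Val))
    (hC1 : ∀ μ r, r ∈ CW → stepC μ r = CA r μ)
    (hC2 : ∀ μ r, r ∉ CW → stepC μ r = μ r)
    (hComp1 : ∀ μ r, r ∈ MW → stepComp μ r = MA r μ)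
    (hComp2 : ∀ μ r, r ∉ MW → r ∈ CW → stepComp μ r = CA r μ)
    (hComp3 : ∀ μ r, r ∉ MW → r ∉ CW → stepComp μ r = μ r)
    (μ : R → Val) (i : ℕ) :
    ∀ r ∈ Cregs, (stepComp^[i] μ) r = (stepC^[i] μ) r := by
  induction i with
  | zero => intro r _; simp
  | succ n ih =>
    intro r hr
    rw [Function.iterate_succ_apply', Function.iterate_succ_apply']
    have hrM : r ∉ MW := fun h => hdisj r h hr
    by_cases hc : r ∈ CW
    · rw [hComp2 _ r hrM hc, hC1 _ r hc]
      exact hdep r hc _ _ ih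
    · rw [hComp3 _ r hrM hc, hC2 _ r hc]
      exact ih r hr
end

section
/- Decoupling theorem, forward direction: assume ISA compliance, i.e., for every initial implementation state μ, the φ-filtered trace of the implementation agrees on architectural registers with the trace of the architecture started from the architectural projection of μ, and architectural registers only change at steps where φ holds. Assume microarchitectural contract satisfaction: for all initial states μ, μ' agreeing on microarchitectural registers, equality of φ-filtered leakage-monitor traces on the implementation implies equality of attacker traces on the implementation. Then contract satisfaction holds: for all initial states μ, μ' agreeing on microarchitectural registers, equality of leakage-monitor traces on the architecture implies equality of attacker traces on the implementation. -/
/-- Decoupling theorem, forward direction. States are pairs of an architectural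
valuation (in `A`) and a microarchitectural valuation (in `M`); the architectural
projection is `Prod.fst`. Filtered traces are obtained via `Nat.nth` over the
indices at which the retirement predicate `φ` holds. ISA compliance plus
microarchitectural contract satisfaction imply contract satisfaction. -/
theorem stmt3 {A M Obs Obs' : Type}
    (arch : A → A) (IMPL : A × M → A × M)
    (φ : A × M → Prop) (L : A → Obs) (ATK : A × M → Obs')
    (Init : Set (A × M))
    -- ISA compliance (1): witnessed architectural changes agree with arch
    (compl1 : ∀ μ ∈ Init, ∀ k : ℕ,
      (IMPL^[Nat.nth (fun n => φ (IMPL^[n] μ)) k] μ).1 = arch^[k] μ.1)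
    -- ISA compliance (2): no architectural changes beyond those witnessed
    (compl2 : ∀ μ ∈ Init, ∀ i : ℕ, 1 ≤ i → ¬ φ (IMPL^[i] μ) →
      (IMPL^[i] μ).1 = (IMPL^[i - 1] μ).1)
    -- microarchitectural contract satisfaction
    (hμsat : ∀ μ ∈ Init, ∀ μ' ∈ Init, μ.2 = μ'.2 →
      (fun k => L ((IMPL^[Nat.nth (fun n => φ (IMPL^[n] μ)) k] μ).1)) =
        (fun k => L ((IMPL^[Nat.nth (fun n => φ (IMPL^[n] μ')) k] μ').1)) →
      (fun n => ATK (IMPL^[n] μ)) = (fun n => ATK (IMPL^[n] μ'))) :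
    -- contract satisfaction
    ∀ μ ∈ Init, ∀ μ' ∈ Init, μ.2 = μ'.2 →
      (fun n => L (arch^[n] μ.1)) = (fun n => L (arch^[n] μ'.1)) →
      (fun n => ATK (IMPL^[n] μ)) = (fun n => ATK (IMPL^[n] μ')) := by
  intro μ hμ μ' hμ' h2 hL
  apply hμsat μ hμ μ' hμ' h2
  funext k
  simp only [compl1 μ hμ k, compl1 μ' hμ' k]
  exact congrFun hL k
end

section
/- Decoupling theorem, backward direction: under the same ISA-compliance assumption, contract satisfaction (equality of architecture leakage traces implies equality of implementation attacker traces, for initial states agreeing on microarchitectural registers) implies microarchitectural contract satisfaction (equality of φ-filtered implementation leakage traces implies equality of implementation attacker traces). -/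
/-- Decoupling theorem, backward direction: under ISA compliance, contract
satisfaction implies microarchitectural contract satisfaction. -/
theorem stmt4 {A M Obs Obs' : Type}
    (arch : A → A) (IMPL : A × M → A × M)
    (φ : A × M → Prop) (L : A → Obs) (ATK : A × M → Obs')
    (Init : Set (A × M))
    -- ISA compliance (1): witnessed architectural changes agree with arch
    (compl1 : ∀ μ ∈ Init, ∀ k : ℕ,
      (IMPL^[Nat.nth (fun n => φ (IMPL^[n] μ)) k] μ).1 = arch^[k] μ.1)
    -- ISA compliance (2): no architectural changes beyond those witnessed
    (compl2 : ∀ μ ∈ Init, ∀ i : ℕ, 1 ≤ i → ¬ φ (IMPL^[i] μ) →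
      (IMPL^[i] μ).1 = (IMPL^[i - 1] μ).1)
    -- contract satisfaction
    (hsat : ∀ μ ∈ Init, ∀ μ' ∈ Init, μ.2 = μ'.2 →
      (fun n => L (arch^[n] μ.1)) = (fun n => L (arch^[n] μ'.1)) →
      (fun n => ATK (IMPL^[n] μ)) = (fun n => ATK (IMPL^[n] μ'))) :
    -- microarchitectural contract satisfaction
    ∀ μ ∈ Init, ∀ μ' ∈ Init, μ.2 = μ'.2 →
      (fun k => L ((IMPL^[Nat.nth (fun n => φ (IMPL^[n] μ)) k] μ).1)) =
        (fun k => L ((IMPL^[Nat.nth (fun n => φ (IMPL^[n] μ')) k] μ').1)) →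
      (fun n => ATK (IMPL^[n] μ)) = (fun n => ATK (IMPL^[n] μ')) := by
  intro μ hμ μ' hμ' h2 hL
  apply hsat μ hμ μ' hμ' h2
  funext k
  have := congrFun hL k
  rwa [compl1 μ hμ k, compl1 μ' hμ' k] at this
end

section
/- Soundness of the verification algorithm: let C be a deterministic transition system on pairs of implementation states (a product system), with initial condition Init (both components initial and agreeing on microarchitectural registers), assumption Φ_ctr (equality of filtered contract observations), and a set LI of relational invariants satisfying the Base and Inductive conditions with lookahead b. If additionally every state satisfying all invariants in LI satisfies attacker-observation equality ψ_ATK, then microarchitectural contract satisfaction holds: for all pairs of initial states μ, μ' agreeing on microarchitectural registers whose runs satisfy Φ_ctr at every step, the attacker observations agree at every step. -/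
/-- Soundness of the verification algorithm: relational invariants learned on
the (non-stuttering) product system that imply attacker-observation equality
establish microarchitectural contract satisfaction. -/
theorem stmt7 {S Obs : Type} (IMPL : S → S) (ATK : S → Obs)
    (Init0 : S → Prop) (μeq : S → S → Prop)
    (Φctr : S × S → Prop) (b : ℕ) (hb : 1 ≤ b)
    (LI : Set (S × S → Prop))
    (C : S × S → S × S) (hC : ∀ p, C p = (IMPL p.1, IMPL p.2))
    (Init : S × S → Prop)
    (hInit : ∀ p, Init p ↔ Init0 p.1 ∧ Init0 p.2 ∧ μeq p.1 p.2)
    -- Base condition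
    (base : ∀ p, Init p → (∀ j < b, Φctr (C^[j] p)) → ∀ ψ ∈ LI, ψ p)
    -- Inductive condition
    (ind : ∀ p, (∀ ψ ∈ LI, ψ p) → (∀ j < b, Φctr (C^[j] p)) → ∀ ψ ∈ LI, ψ (C p))
    -- the learned invariants imply attacker-observation equality
    (hatk : ∀ p : S × S, (∀ ψ ∈ LI, ψ p) → ATK p.1 = ATK p.2) :
    ∀ μ μ' : S, Init0 μ → Init0 μ' → μeq μ μ' →
      (∀ n, Φctr (C^[n] (μ, μ'))) →
      ∀ n, ATK (IMPL^[n] μ) = ATK (IMPL^[n] μ') := by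
  intro μ μ' h1 h2 h3 hphi n
  -- C^[n] (μ, μ') = (IMPL^[n] μ, IMPL^[n] μ')
  have hCn : ∀ m, C^[m] (μ, μ') = (IMPL^[m] μ, IMPL^[m] μ') := by
    intro m
    induction m with
    | zero => simp
    | succ m ih =>
      rw [Function.iterate_succ_apply', Function.iterate_succ_apply',
        Function.iterate_succ_apply', ih, hC]
  -- invariants hold along the run
  have hinv : ∀ m, ∀ ψ ∈ LI, ψ (C^[m] (μ, μ')) := by
    intro m
    induction m with
    | zero =>
      simpa using base (μ, μ') ((hInit _).2 ⟨h1, h2, h3⟩)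
        (fun j _ => hphi j)
    | succ m ih =>
      rw [Function.iterate_succ_apply']
      exact ind _ ih (fun j _ => by
        rw [← Function.iterate_add_apply]; exact hphi (j + m)) 
  have := hatk _ (hinv n)
  rwa [hCn n] at this
end

section
/- The two-phase implementation sIMP correctly implements sISA with retirement predicate ret = 1: for every memory m and initial state (pc=0, reg=0, st=0, ret=1), the subsequence of (pc, reg) values of sIMP's run at steps where ret = 1 equals sISA's run of (pc, reg) values, and (pc, reg) is unchanged at any step where ret = 0. -/
/-- State of the two-phase implementation sIMP. -/
structure SImpState where
  pc : ℕ
  reg : ℕ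
  st : ℕ
  res : ℕ
  ret : ℕ

/-- Step of the architecture sISA. -/
def sISAStep (m : ℕ → ℕ) (s : ℕ × ℕ) : ℕ × ℕ := (s.1 + 1, s.2 + m s.1)

/-- Step of the implementation sIMP. -/
def sIMPStep (m : ℕ → ℕ) (s : SImpState) : SImpState :=
  if s.st = 0 then
    if m s.pc = 0 then ⟨s.pc + 1, s.reg, 0, s.res, 1⟩
    else ⟨s.pc, s.reg, 1, m s.pc + s.reg, 0⟩
  else ⟨s.pc + 1, s.res, 0, s.res, 1⟩

/-- time of the k-th retired state -/
def tRet (m : ℕ → ℕ) : ℕ → ℕ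
  | 0 => 0
  | k + 1 => tRet m k + (if m (((sISAStep m)^[k] (0, 0)).1) = 0 then 1 else 2)

lemma sIMP_inv (m : ℕ → ℕ) (k : ℕ) :
    ((sIMPStep m)^[tRet m k] (⟨0, 0, 0, 0, 1⟩ : SImpState)).pc = ((sISAStep m)^[k] (0, 0)).1 ∧
    ((sIMPStep m)^[tRet m k] (⟨0, 0, 0, 0, 1⟩ : SImpState)).reg = ((sISAStep m)^[k] (0, 0)).2 ∧
    ((sIMPStep m)^[tRet m k] (⟨0, 0, 0, 0, 1⟩ : SImpState)).st = 0 ∧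
    ((sIMPStep m)^[tRet m k] (⟨0, 0, 0, 0, 1⟩ : SImpState)).ret = 1 := by
  induction k with
  | zero => exact ⟨rfl, rfl, rfl, rfl⟩
  | succ k ih =>
    obtain ⟨hpc, hreg, hst, hret⟩ := ih
    set s := (sIMPStep m)^[tRet m k] (⟨0, 0, 0, 0, 1⟩ : SImpState) with hs
    set p := ((sISAStep m)^[k] (0, 0)).1 with hp
    set r := ((sISAStep m)^[k] (0, 0)).2
    have hA : (sISAStep m)^[k + 1] (0, 0) = (p + 1, r + m p) := by
      rw [Function.iterate_succ_apply', sISAStep]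
    by_cases hm : m p = 0
    · have ht : tRet m (k + 1) = tRet m k + 1 := by
        rw [tRet, ← hp, if_pos hm]
      rw [ht, Function.iterate_succ_apply', ← hs, sIMPStep, if_pos hst,
        if_pos (show m s.pc = 0 by rw [hpc]; exact hm), hA]
      exact ⟨by rw [hpc], by simp [hreg, hm], rfl, rfl⟩
    · have ht : tRet m (k + 1) = (tRet m k + 1) + 1 := by
        rw [tRet, ← hp, if_neg hm]
      have h1 : (sIMPStep m)^[tRet m k + 1] (⟨0, 0, 0, 0, 1⟩ : SImpState) =
          ⟨p, r, 1, m p + r, 0⟩ := by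
        rw [Function.iterate_succ_apply', ← hs, sIMPStep, if_pos hst,
          if_neg (show ¬ m s.pc = 0 by rw [hpc]; exact hm), hpc, hreg]
      rw [ht, Function.iterate_succ_apply', h1, sIMPStep,
        if_neg (show ¬ (1 : ℕ) = 0 by simp), hA]
      exact ⟨rfl, Nat.add_comm _ _, rfl, rfl⟩

lemma sIMP_stall (m : ℕ → ℕ) (k : ℕ) (hm : m (((sISAStep m)^[k] (0, 0)).1) ≠ 0) :
    ((sIMPStep m)^[tRet m k + 1] (⟨0, 0, 0, 0, 1⟩ : SImpState)).ret = 0 := by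
  obtain ⟨hpc, hreg, hst, hret⟩ := sIMP_inv m k
  rw [Function.iterate_succ_apply', sIMPStep, if_pos hst,
    if_neg (show ¬ m ((sIMPStep m)^[tRet m k] (⟨0, 0, 0, 0, 1⟩ : SImpState)).pc = 0 by
      rw [hpc]; exact hm)]

open Classical in
lemma count_tRet (m : ℕ → ℕ) (k : ℕ) :
    Nat.count (fun n => ((sIMPStep m)^[n] (⟨0, 0, 0, 0, 1⟩ : SImpState)).ret = 1) (tRet m k)
      = k := by
  induction k with
  | zero => rfl
  | succ k ih =>
    have hret := (sIMP_inv m k).2.2.2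
    by_cases hm : m (((sISAStep m)^[k] (0, 0)).1) = 0
    · have ht : tRet m (k + 1) = tRet m k + 1 := by rw [tRet, if_pos hm]
      rw [ht, Nat.count_succ, if_pos hret, ih]
    · have ht : tRet m (k + 1) = (tRet m k + 1) + 1 := by rw [tRet, if_neg hm]
      have h0 : ¬ ((sIMPStep m)^[tRet m k + 1] (⟨0, 0, 0, 0, 1⟩ : SImpState)).ret = 1 := by
        rw [sIMP_stall m k hm]; simp
      rw [ht, Nat.count_succ, Nat.count_succ, if_pos hret, if_neg h0, ih]

/-- sIMP correctly implements sISA with retirement predicate `ret = 1`: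
the subsequence of `(pc, reg)` values of sIMP's run at steps where `ret = 1`
equals sISA's run, and `(pc, reg)` is unchanged at any step where `ret = 0`. -/
theorem stmt18 (m : ℕ → ℕ) :
    (∀ k : ℕ,
      ((sIMPStep m)^[Nat.nth
          (fun n => ((sIMPStep m)^[n] ⟨0, 0, 0, 0, 1⟩).ret = 1) k]
          (⟨0, 0, 0, 0, 1⟩ : SImpState)).pc = ((sISAStep m)^[k] (0, 0)).1 ∧
      ((sIMPStep m)^[Nat.nth
          (fun n => ((sIMPStep m)^[n] ⟨0, 0, 0, 0, 1⟩).ret = 1) k]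
          (⟨0, 0, 0, 0, 1⟩ : SImpState)).reg = ((sISAStep m)^[k] (0, 0)).2) ∧
    (∀ n : ℕ,
      ((sIMPStep m)^[n + 1] (⟨0, 0, 0, 0, 1⟩ : SImpState)).ret = 0 →
      ((sIMPStep m)^[n + 1] (⟨0, 0, 0, 0, 1⟩ : SImpState)).pc =
        ((sIMPStep m)^[n] (⟨0, 0, 0, 0, 1⟩ : SImpState)).pc ∧
      ((sIMPStep m)^[n + 1] (⟨0, 0, 0, 0, 1⟩ : SImpState)).reg =
        ((sIMPStep m)^[n] (⟨0, 0, 0, 0, 1⟩ : SImpState)).reg) := by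
  classical
  have hnth : ∀ k, Nat.nth
      (fun n => ((sIMPStep m)^[n] (⟨0, 0, 0, 0, 1⟩ : SImpState)).ret = 1) k = tRet m k := by
    intro k
    have := Nat.nth_count (p := fun n =>
      ((sIMPStep m)^[n] (⟨0, 0, 0, 0, 1⟩ : SImpState)).ret = 1) (sIMP_inv m k).2.2.2
    rwa [count_tRet] at this
  constructor
  · intro k
    rw [hnth k]
    exact ⟨(sIMP_inv m k).1, (sIMP_inv m k).2.1⟩
  · intro n h
    rw [Function.iterate_succ_apply'] at h ⊢
    set s := (sIMPStep m)^[n] (⟨0, 0, 0, 0, 1⟩ : SImpState)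
    unfold sIMPStep at h ⊢
    by_cases hst : s.st = 0
    · by_cases hm : m s.pc = 0
      · simp [hst, hm] at h
      · simp [hst, hm]
    · simp [hst] at h
end
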